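/- If Q is an (r,s,t)-inverse quasigroup with permutation J: Q → Q such that J^h is a quasigroup automorphism of Q, then Q is an (r+uh, s+uh, t+uh)-inverse quasigroup for every integer u. -/

import Mathlib

theorem stmt_6 {Q : Type*} [Mul Q]
    (hq₁ : ∀ a b : Q, ∃! x : Q, a * x = b)
    (hq₂ : ∀ a b : Q, ∃! y : Q, y * a = b)
    (J : Equiv.Perm Q) (r s t h : ℤ)
    (hrst : ∀ x y : Q, (J ^ r) (x * y) * (J ^ s) x = (J ^ t) y)
    (haut : ∀ x y : Q, (J ^ h) (x * y) = (J ^ h) x * (J ^ h) y) :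
    ∀ u : ℤ, ∀ x y : Q,
      (J ^ (r + u * h)) (x * y) * (J ^ (s + u * h)) x = (J ^ (t + u * h)) y := by
  -- inverse of the automorphism is an automorphism
  have hinv : ∀ x y : Q, (J ^ (-h)) (x * y) = (J ^ (-h)) x * (J ^ (-h)) y := by
    intro x y
    have := haut ((J ^ (-h)) x) ((J ^ (-h)) y)
    have e : ∀ z : Q, (J ^ h) ((J ^ (-h)) z) = z := by
      intro z
      have : (J ^ h) ((J ^ (-h)) z) = ((J ^ h) * (J ^ (-h))) z := rfl
      rw [this, ← zpow_add, add_neg_cancel, zpow_zero]; rfl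
    rw [e, e] at this
    have := congrArg (J ^ (-h)) this
    have e' : ∀ z : Q, (J ^ (-h)) ((J ^ h) z) = z := by
      intro z
      have : (J ^ (-h)) ((J ^ h) z) = ((J ^ (-h)) * (J ^ h)) z := rfl
      rw [this, ← zpow_add, neg_add_cancel, zpow_zero]; rfl
    rw [e'] at this
    exact this.symm
  -- J^(u*h) is an automorphism for all u : ℤ
  have hpow : ∀ u : ℤ, ∀ x y : Q, (J ^ (u * h)) (x * y) = (J ^ (u * h)) x * (J ^ (u * h)) y := by
    intro u
    induction u using Int.induction_on with
    | zero => intro x y; simp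
    | succ n ih =>
        intro x y
        have key : ((n : ℤ) + 1) * h = h + n * h := by ring
        rw [key, zpow_add]
        simp only [Equiv.Perm.mul_apply]
        rw [ih, haut]
    | pred n ih =>
        intro x y
        have key : (-(n : ℤ) - 1) * h = -h + (-n * h) := by ring
        rw [key, zpow_add]
        simp only [Equiv.Perm.mul_apply]
        rw [ih, hinv]
  intro u x y
  have e : ∀ k : ℤ, ∀ z : Q, (J ^ (k + u * h)) z = (J ^ (u * h)) ((J ^ k) z) := by
    intro k z
    rw [add_comm, zpow_add]; rfl
  rw [e, e, e, ← hpow, hrst]
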